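/- Let G be a group with left-ordering <_P with positive cone P, and let H(G,P) = B_f ⋊ G be the group constructed from the 2-cocycle f(b_g, b_h) = a_{g⁻¹h} (if g <_P h, else 0) with G acting on B_f by g·(a, Σ tⱼ b_{gⱼ}) = (a, Σ tⱼ b_{ggⱼ}). Then every automorphism φ of G preserving <_P induces an automorphism φ̃ of H(G,P) satisfying φ̃((a_h, 0), id) = ((a_{φ(h)}, 0), id) for all h ∈ P, and the assignment φ ↦ φ̃ is an injective group homomorphism Aut(G, <_P) → Aut(H(G,P)). -/

import Mathlib

/-- Underlying set of `H(G,P) = B_f ⋊ G`, where `B_f` has underlying set `A × B` with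
`A = {x // 1 < x} →₀ ℤ` (free abelian group on the positive cone `P = {x | 1 < x}`) and
`B = G →₀ ℤ` (free abelian group on `G`). -/
abbrev HCar (G : Type*) [Group G] [LinearOrder G] : Type _ :=
  (({x : G // 1 < x} →₀ ℤ) × (G →₀ ℤ)) × G

/-- Multiplication of `H(G,P) = B_f ⋊ G`, built from the 2-cocycle `f` on `B` and the
shift action `g · Σ tⱼ b_{gⱼ} = Σ tⱼ b_{g gⱼ}` of `G` on `B_f`. -/
noncomputable def hmul {G : Type*} [Group G] [LinearOrder G]
    (f : (G →₀ ℤ) → (G →₀ ℤ) → ({x : G // 1 < x} →₀ ℤ)) (x y : HCar G) : HCar G :=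
  ((x.1.1 + y.1.1 + f x.1.2 (Finsupp.mapDomain (fun z => x.2 * z) y.1.2),
    x.1.2 + Finsupp.mapDomain (fun z => x.2 * z) y.1.2), x.2 * y.2)

/-- The map `φ̃` induced on `H(G,P)` by an order-preserving automorphism `φ` of `G`:
`φ̃(Σ sᵢ a_{hᵢ}, Σ tⱼ b_{gⱼ}, g) = (Σ sᵢ a_{φ(hᵢ)}, Σ tⱼ b_{φ(gⱼ)}, φ(g))`. -/
noncomputable def tilde {G : Type*} [Group G] [LinearOrder G] (φ : G ≃* G)
    (hφ : ∀ g h : G, g < h ↔ φ g < φ h) (x : HCar G) : HCar G :=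
  ((Finsupp.mapDomain
      (fun p : {x : G // 1 < x} =>
        (⟨φ p.1, by simpa using (hφ 1 p.1).mp p.2⟩ : {x : G // 1 < x})) x.1.1,
    Finsupp.mapDomain (fun g => φ g) x.1.2), φ x.2)

/-- Let `G` carry a left-ordering `<` with positive cone `P = {x | 1 < x}`
and let `H(G,P) = B_f ⋊ G` be built from the 2-cocycle `f` (the bilinear extension of
`f(b_g, b_h) = a_{g⁻¹h}` if `g < h`, else `0`).  Every automorphism `φ` of `G`
preserving `<` induces an automorphism `φ̃` of `H(G,P)` with
`φ̃((a_h, 0), 1) = ((a_{φ h}, 0), 1)`, and `φ ↦ φ̃` is an injective group homomorphism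
`Aut(G, <) → Aut(H(G,P))`. -/
theorem stmt18 (G : Type*) [Group G] [LinearOrder G]
    (hleft : ∀ a b c : G, a < b → c * a < c * b)
    (f : (G →₀ ℤ) → (G →₀ ℤ) → ({x : G // 1 < x} →₀ ℤ))
    (hbilin1 : ∀ b b' c : G →₀ ℤ, f (b + b') c = f b c + f b' c)
    (hbilin2 : ∀ b c c' : G →₀ ℤ, f b (c + c') = f b c + f b c')
    (hsingle : ∀ g h : G, f (Finsupp.single g 1) (Finsupp.single h 1) =
      if hlt : g < h then
        Finsupp.single (⟨g⁻¹ * h, by simpa using hleft g h g⁻¹ hlt⟩ : {x : G // 1 < x}) 1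
      else 0) :
    (∀ (φ : G ≃* G) (hφ : ∀ g h : G, g < h ↔ φ g < φ h),
      Function.Bijective (tilde φ hφ)) ∧
    (∀ (φ : G ≃* G) (hφ : ∀ g h : G, g < h ↔ φ g < φ h) (x y : HCar G),
      tilde φ hφ (hmul f x y) = hmul f (tilde φ hφ x) (tilde φ hφ y)) ∧
    (∀ (φ : G ≃* G) (hφ : ∀ g h : G, g < h ↔ φ g < φ h) (h : {x : G // 1 < x}),
      tilde φ hφ ((Finsupp.single h 1, 0), 1) =
        ((Finsupp.single (⟨φ h.1, by simpa using (hφ 1 h.1).mp h.2⟩ : {x : G // 1 < x}) 1,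
          0), 1)) ∧
    (∀ (φ : G ≃* G) (hφ : ∀ g h : G, g < h ↔ φ g < φ h)
       (ψ : G ≃* G) (hψ : ∀ g h : G, g < h ↔ ψ g < ψ h)
       (hcomp : ∀ g h : G, g < h ↔ (ψ.trans φ) g < (ψ.trans φ) h) (x : HCar G),
      tilde (ψ.trans φ) hcomp x = tilde φ hφ (tilde ψ hψ x)) ∧
    (∀ (φ : G ≃* G) (hφ : ∀ g h : G, g < h ↔ φ g < φ h)
       (ψ : G ≃* G) (hψ : ∀ g h : G, g < h ↔ ψ g < ψ h),
      (∀ x : HCar G, tilde φ hφ x = tilde ψ hψ x) → φ = ψ) := by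

  classical
  -- bilinearity over ℤ via an AddMonoidHom packaging
  have h0l : ∀ c : G →₀ ℤ, f 0 c = 0 := by
    intro c
    have h := hbilin1 0 0 c
    rw [add_zero] at h
    exact (left_eq_add.mp h)
  have h0r : ∀ b : G →₀ ℤ, f b 0 = 0 := by
    intro b
    have h := hbilin2 b 0 0
    rw [add_zero] at h
    exact (left_eq_add.mp h)
  set F : (G →₀ ℤ) →+ (G →₀ ℤ) →+ ({x : G // 1 < x} →₀ ℤ) :=
    AddMonoidHom.mk' (fun b => AddMonoidHom.mk' (f b) (fun c c' => hbilin2 b c c'))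
      (fun b b' => AddMonoidHom.ext fun c => hbilin1 b b' c) with hF
  have hFapp : ∀ b c, F b c = f b c := fun b c => rfl
  have hsmul : ∀ (n m : ℤ) (b c : G →₀ ℤ),
      f (n • b) (m • c) = (n * m) • f b c := by
    intro n m b c
    have h1 : F (n • b) = n • F b := map_zsmul F n b
    calc f (n • b) (m • c) = F (n • b) (m • c) := rfl
      _ = (n • F b) (m • c) := by rw [h1]
      _ = n • (F b (m • c)) := rfl
      _ = n • (m • (F b c)) := by rw [map_zsmul]
      _ = (n * m) • f b c := by rw [smul_smul, hFapp]
  have hss : ∀ (g h : G) (n m : ℤ), f (Finsupp.single g n) (Finsupp.single h m) =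
      (n * m) • f (Finsupp.single g 1) (Finsupp.single h 1) := by
    intro g h n m
    rw [show (Finsupp.single g n : G →₀ ℤ) = n • Finsupp.single g 1 by
        rw [Finsupp.smul_single, smul_eq_mul, mul_one],
      show (Finsupp.single h m : G →₀ ℤ) = m • Finsupp.single h 1 by
        rw [Finsupp.smul_single, smul_eq_mul, mul_one], hsmul]
  -- key compatibility of f with mapDomain by an order-preserving automorphism
  have key : ∀ (φ : G ≃* G) (hφ : ∀ g h : G, g < h ↔ φ g < φ h) (b c : G →₀ ℤ),
      Finsupp.mapDomain
        (fun p : {x : G // 1 < x} =>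
          (⟨φ p.1, by simpa using (hφ 1 p.1).mp p.2⟩ : {x : G // 1 < x})) (f b c)
        = f (Finsupp.mapDomain (fun g => φ g) b) (Finsupp.mapDomain (fun g => φ g) c) := by
    intro φ hφ b c
    set Φ : {x : G // 1 < x} → {x : G // 1 < x} :=
      fun p => ⟨φ p.1, by simpa using (hφ 1 p.1).mp p.2⟩ with hΦ
    induction b using Finsupp.induction_linear with
    | zero => simp [h0l, Finsupp.mapDomain_zero]
    | add b b' ih ih' =>
        rw [hbilin1, Finsupp.mapDomain_add, Finsupp.mapDomain_add, hbilin1, ih, ih']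
    | single g n =>
        induction c using Finsupp.induction_linear with
        | zero => simp [h0r, Finsupp.mapDomain_zero]
        | add c c' ih ih' =>
            rw [hbilin2, Finsupp.mapDomain_add, Finsupp.mapDomain_add, hbilin2, ih, ih']
        | single h m =>
            rw [hss g h n m, Finsupp.mapDomain_single, Finsupp.mapDomain_single,
              hss (φ g) (φ h) n m, Finsupp.mapDomain_smul, hsingle g h,
              hsingle (φ g) (φ h)]
            congr 1
            by_cases hgh : g < h
            · rw [dif_pos hgh, dif_pos ((hφ g h).mp hgh), Finsupp.mapDomain_single]
              congr 1
              exact Subtype.ext (by simp [hΦ])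
            · rw [dif_neg hgh, dif_neg (fun hc => hgh ((hφ g h).mpr hc)),
                Finsupp.mapDomain_zero]
  -- mapDomain φ commutes with the shift action
  have shift : ∀ (φ : G ≃* G) (g : G) (c : G →₀ ℤ),
      Finsupp.mapDomain (fun x => φ x) (Finsupp.mapDomain (fun z => g * z) c)
        = Finsupp.mapDomain (fun z => φ g * z) (Finsupp.mapDomain (fun x => φ x) c) := by
    intro φ g c
    rw [← Finsupp.mapDomain_comp, ← Finsupp.mapDomain_comp]
    congr 1
    funext z
    simp [Function.comp, map_mul]
  -- composition law
  have comp : ∀ (φ : G ≃* G) (hφ : ∀ g h : G, g < h ↔ φ g < φ h)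
      (ψ : G ≃* G) (hψ : ∀ g h : G, g < h ↔ ψ g < ψ h)
      (hcomp : ∀ g h : G, g < h ↔ (ψ.trans φ) g < (ψ.trans φ) h) (x : HCar G),
      tilde (ψ.trans φ) hcomp x = tilde φ hφ (tilde ψ hψ x) := by
    intro φ hφ ψ hψ hcomp x
    unfold tilde
    simp only [← Finsupp.mapDomain_comp]
    rfl
  -- tilde of anything acting as identity is identity
  have tid : ∀ (e : G ≃* G) (he : ∀ g h : G, g < h ↔ e g < e h),
      (∀ g, e g = g) → ∀ x : HCar G, tilde e he x = x := by
    intro e he hid x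
    unfold tilde
    refine Prod.ext (Prod.ext ?_ ?_) (hid _)
    · rw [show (fun p : {x : G // 1 < x} =>
          (⟨e p.1, by simpa using (he 1 p.1).mp p.2⟩ : {x : G // 1 < x})) = id from
          funext fun p => Subtype.ext (hid p.1), Finsupp.mapDomain_id]
    · rw [show (fun g : G => e g) = id from funext hid, Finsupp.mapDomain_id]
  refine ⟨?_, ?_, ?_, comp, ?_⟩
  · -- bijectivity
    intro φ hφ
    have hφ' : ∀ g h : G, g < h ↔ φ.symm g < φ.symm h := by
      intro g h
      conv_lhs => rw [show g = φ (φ.symm g) from (φ.apply_symm_apply g).symm,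
        show h = φ (φ.symm h) from (φ.apply_symm_apply h).symm]
      exact (hφ _ _).symm
    have hc1 : ∀ g h : G, g < h ↔ (φ.trans φ.symm) g < (φ.trans φ.symm) h := by
      intro g h; simp
    have hc2 : ∀ g h : G, g < h ↔ (φ.symm.trans φ) g < (φ.symm.trans φ) h := by
      intro g h; simp
    refine ⟨Function.LeftInverse.injective (g := tilde φ.symm hφ') ?_,
      Function.RightInverse.surjective (g := tilde φ.symm hφ') ?_⟩
    · intro x
      rw [← comp φ.symm hφ' φ hφ hc1]
      exact tid _ hc1 (fun g => φ.symm_apply_apply g) x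
    · intro x
      rw [← comp φ hφ φ.symm hφ' hc2]
      exact tid _ hc2 (fun g => φ.apply_symm_apply g) x
  · -- multiplicativity
    intro φ hφ x y
    unfold tilde hmul
    refine Prod.ext (Prod.ext ?_ ?_) (map_mul φ _ _)
    · simp only [Finsupp.mapDomain_add]
      rw [key φ hφ, shift φ]
    · simp only [Finsupp.mapDomain_add]
      rw [shift φ]
  · -- action on generators
    intro φ hφ h
    unfold tilde
    refine Prod.ext (Prod.ext ?_ ?_) (map_one φ)
    · exact Finsupp.mapDomain_single
    · simp
  · -- injectivity
    intro φ hφ ψ hψ hx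
    ext g
    have := congrArg Prod.snd (hx ((0, 0), g))
    simpa [tilde] using this
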